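/- Let n ≥ 2, 0 < β < n, 1 < p̄, q̄ < ∞, and 1 < p < q < ∞ with 1/p − 1/q = β/n. For the function f₀(x) = (1 + |x|^{qβ})^{-(1 + n/(qβ))} on ℝⁿ one has the equality ‖H_β f₀‖_{L^q_{|x|}L^{q̄}_θ} = C_{p,q,n,β} · ω_n^{1/q̄ - 1/p̄ + β/n} · ‖f₀‖_{L^p_{|x|}L^{p̄}_θ}; in particular the constant C_{p,q,n,β} · ω_n^{1/q̄ - 1/p̄ + β/n} is sharp, i.e., it equals the operator norm of H_β from L^p_{|x|}L^{p̄}_θ(ℝⁿ) to L^q_{|x|}L^{q̄}_θ(ℝⁿ). -/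

import Mathlib

open MeasureTheory Metric Set

noncomputable section

/-- Euclidean space ℝⁿ. -/
abbrev Euc (n : ℕ) := EuclideanSpace ℝ (Fin n)

/-- Volume of the unit ball in ℝⁿ: Ω_n = π^(n/2) / Γ(1 + n/2). -/
def ballVol (n : ℕ) : ℝ := Real.pi ^ ((n : ℝ) / 2) / Real.Gamma (1 + (n : ℝ) / 2)

/-- Surface measure of the unit sphere S^{n-1}: ω_n = 2π^(n/2) / Γ(n/2). -/
def sphArea (n : ℕ) : ℝ := 2 * Real.pi ^ ((n : ℝ) / 2) / Real.Gamma ((n : ℝ) / 2)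

/-- The surface measure dθ on the unit sphere S^{n-1} ⊂ ℝⁿ (total mass ω_n = n·Ω_n). -/
def sphereMeasure (n : ℕ) : Measure (sphere (0 : Euc n) 1) :=
  (volume : Measure (Euc n)).toSphere

/-- Mixed radial-angular norm
‖f‖ = (∫₀^∞ (∫_{S^{n-1}} |f(rθ)|^{p̄} dθ)^{p/p̄} r^{n-1} dr)^{1/p}. -/
def mixedNorm (n : ℕ) (p pb : ℝ) (f : Euc n → ℝ) : ℝ :=
  (∫ r in Ioi (0 : ℝ),
      (∫ θ, |f (r • (θ : Euc n))| ^ pb ∂(sphereMeasure n)) ^ (p / pb) * r ^ ((n : ℝ) - 1)) ^ (1 / p)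

/-- Weak mixed radial-angular norm: sup_{λ>0} λ‖χ_{|f|>λ}‖. -/
def wMixedNorm (n : ℕ) (p pb : ℝ) (f : Euc n → ℝ) : ℝ :=
  ⨆ l : {l : ℝ // 0 < l},
    l.1 * mixedNorm n p pb (indicator {x | l.1 < |f x|} fun _ => (1 : ℝ))

/-- n-dimensional Hardy operator H f(x) = (Ω_n |x|ⁿ)⁻¹ ∫_{|y|<|x|} f(y) dy. -/
def hardyOp (n : ℕ) (f : Euc n → ℝ) (x : Euc n) : ℝ :=
  (ballVol n * ‖x‖ ^ n)⁻¹ * ∫ y in {y : Euc n | ‖y‖ < ‖x‖}, f y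

/-- Dual Hardy operator H* f(x) = ∫_{|y|≥|x|} f(y)/(Ω_n |y|ⁿ) dy. -/
def dualHardyOp (n : ℕ) (f : Euc n → ℝ) (x : Euc n) : ℝ :=
  ∫ y in {y : Euc n | ‖x‖ ≤ ‖y‖}, f y / (ballVol n * ‖y‖ ^ n)

/-- Fractional Hardy operator H_β f(x) = (Ω_n^{1/n}|x|)^{β-n} ∫_{|y|<|x|} f(y) dy. -/
def fracHardyOp (n : ℕ) (β : ℝ) (f : Euc n → ℝ) (x : Euc n) : ℝ :=
  (ballVol n ^ ((1 : ℝ) / n) * ‖x‖) ^ (-((n : ℝ) - β)) * ∫ y in {y : Euc n | ‖y‖ < ‖x‖}, f y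

/-- L^p norm on ℝⁿ. -/
def lpNorm (n : ℕ) (p : ℝ) (f : Euc n → ℝ) : ℝ := (∫ x : Euc n, |f x| ^ p) ^ (1 / p)

/-- Beta function B(a,b) = ∫₀¹ t^{a-1}(1-t)^{b-1} dt. -/
def betaFn (a b : ℝ) : ℝ := ∫ t in (0 : ℝ)..1, t ^ (a - 1) * (1 - t) ^ (b - 1)

/-- Sharp constant C_{p,q,n,β} = (p'/q)^{1/q}((n/(qβ))·B(n/(qβ), n/(q'β)))^{-β/n}. -/
def fracHardyConst (p q : ℝ) (n : ℕ) (β : ℝ) : ℝ :=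
  (p / (p - 1) / q) ^ (1 / q) *
    ((n / (q * β)) * betaFn ((n : ℝ) / (q * β)) ((n : ℝ) / ((q / (q - 1)) * β))) ^ (-(β / (n : ℝ)))


/-! ### Auxiliary lemmas -/

lemma betaFn_eq_Gamma {a b : ℝ} (ha : 0 < a) (hb : 0 < b) :
    betaFn a b = Real.Gamma a * Real.Gamma b / Real.Gamma (a + b) := by
  have h1 : Complex.betaIntegral a b = ((betaFn a b : ℝ) : ℂ) := by
    rw [Complex.betaIntegral, betaFn, ← intervalIntegral.integral_ofReal]
    refine intervalIntegral.integral_congr fun t ht => ?_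
    rw [uIcc_of_le zero_le_one] at ht
    rw [show ((a:ℂ) - 1) = ((a-1:ℝ):ℂ) by push_cast; ring,
      show ((b:ℂ) - 1) = ((b-1:ℝ):ℂ) by push_cast; ring,
      show (1 - (t:ℂ)) = ((1 - t : ℝ):ℂ) by push_cast; ring,
      ← Complex.ofReal_cpow ht.1, ← Complex.ofReal_cpow (by linarith [ht.2]),
      ← Complex.ofReal_mul]
  have h2 := Complex.Gamma_mul_Gamma_eq_betaIntegral
    (s := (a : ℂ)) (t := (b : ℂ)) (by simpa using ha) (by simpa using hb)
  rw [h1] at h2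
  have h3 : ((a : ℂ) + b) = ((a + b : ℝ) : ℂ) := by push_cast; ring
  rw [h3, Complex.Gamma_ofReal, Complex.Gamma_ofReal, Complex.Gamma_ofReal] at h2
  have h4 : Real.Gamma a * Real.Gamma b = Real.Gamma (a + b) * betaFn a b := by
    exact_mod_cast h2
  have h5 : Real.Gamma (a + b) ≠ 0 := (Real.Gamma_pos_of_pos (by linarith)).ne'
  field_simp [h4]
  linear_combination -h4

lemma betaFn_pos {a b : ℝ} (ha : 0 < a) (hb : 0 < b) : 0 < betaFn a b := by
  rw [betaFn_eq_Gamma ha hb]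
  have := Real.Gamma_pos_of_pos ha
  have := Real.Gamma_pos_of_pos hb
  have := Real.Gamma_pos_of_pos (show (0:ℝ) < a + b by linarith)
  positivity

lemma betaFn_rec {x y : ℝ} (hx : 0 < x) (hy : 0 < y) :
    y * betaFn (x + 1) y = x * betaFn x (y + 1) := by
  rw [betaFn_eq_Gamma (by linarith) hy, betaFn_eq_Gamma hx (by linarith)]
  rw [Real.Gamma_add_one hx.ne', Real.Gamma_add_one hy.ne']
  rw [show x + 1 + y = x + y + 1 by ring, show x + (y + 1) = x + y + 1 by ring]
  ring

lemma image_phi : (fun u : ℝ => u / (1 + u)) '' (Ioi 0) = Ioo 0 1 := by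
  ext t
  simp only [mem_image, mem_Ioi, mem_Ioo]
  constructor
  · rintro ⟨u, hu, rfl⟩
    have h1 : (0:ℝ) < 1 + u := by linarith
    constructor
    · exact div_pos hu h1
    · rw [div_lt_one h1]; linarith
  · rintro ⟨ht0, ht1⟩
    have h1 : (1:ℝ) - t > 0 := by linarith
    refine ⟨t / (1 - t), div_pos ht0 h1, ?_⟩
    field_simp
    ring

lemma integral_Ioi_betaFn {s t : ℝ} (hs : 0 < s) (ht : 0 < t) :
    ∫ u in Ioi (0:ℝ), u ^ (s - 1) * (1 + u) ^ (-(s + t)) = betaFn s t := by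
  have key := integral_image_eq_integral_abs_deriv_smul (s := Ioi (0:ℝ))
    (f := fun u : ℝ => u / (1 + u))
    (f' := fun u : ℝ => 1 / (1 + u) ^ 2) measurableSet_Ioi
    (fun u hu => by
      have hu' := mem_Ioi.mp hu
      have h1 : (1:ℝ) + u ≠ 0 := by linarith
      have h2 : HasDerivAt (fun x : ℝ => (1:ℝ) + x) 1 u := by
        simpa using (hasDerivAt_id u).const_add (1:ℝ)
      have : HasDerivAt (fun u : ℝ => u / (1 + u)) ((1 * (1 + u) - u * 1) / (1 + u) ^ 2) u :=
        (hasDerivAt_id u).div h2 h1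
      have h3 : (1 * (1 + u) - u * 1) / (1 + u) ^ 2 = 1 / (1 + u) ^ 2 := by ring_nf
      rw [h3] at this
      exact this.hasDerivWithinAt)
    (fun u hu v hv h => by
      have hu' := mem_Ioi.mp hu
      have hv' := mem_Ioi.mp hv
      have h1 : (1:ℝ) + u ≠ 0 := by linarith
      have h2 : (1:ℝ) + v ≠ 0 := by linarith
      field_simp at h
      linarith)
    (fun x => x ^ (s - 1) * (1 - x) ^ (t - 1))
  rw [image_phi] at key
  have h1 : betaFn s t = ∫ x in Ioo (0:ℝ) 1, x ^ (s - 1) * (1 - x) ^ (t - 1) := by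
    rw [betaFn, intervalIntegral.integral_of_le zero_le_one,
      MeasureTheory.integral_Ioc_eq_integral_Ioo]
  rw [h1, key]
  refine setIntegral_congr_fun measurableSet_Ioi fun u hu => ?_
  have hu' := mem_Ioi.mp hu
  have h1 : (0:ℝ) < 1 + u := by linarith
  have h2 : (1:ℝ) - u / (1 + u) = 1 / (1 + u) := by field_simp; ring
  rw [smul_eq_mul, h2, abs_of_pos (by positivity), Real.div_rpow hu'.le h1.le,
    Real.div_rpow zero_le_one h1.le, Real.one_rpow]
  rw [show ((1:ℝ) + u) ^ (2:ℕ) = (1 + u) ^ (2:ℝ) by rw [← Real.rpow_natCast]; norm_num]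
  have h3 : ((1:ℝ) + u) ^ (-(s + t)) =
      1 / (1 + u) ^ (2:ℝ) * (1 / (1 + u) ^ (s - 1) * (1 / (1 + u) ^ (t - 1))) := by
    rw [Real.rpow_neg h1.le]
    rw [show s + t = 2 + ((s - 1) + (t - 1)) by ring, Real.rpow_add h1, Real.rpow_add h1]
    field_simp
  rw [h3]
  ring

lemma integral_comp_sub {a s T : ℝ} (ha : 0 < a) :
    ∫ r in Ioi (0:ℝ), r ^ (a * s - 1) * (1 + r ^ a) ^ (-T)
      = (1 / a) * ∫ u in Ioi (0:ℝ), u ^ (s - 1) * (1 + u) ^ (-T) := by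
  have key := integral_comp_rpow_Ioi
    (fun u : ℝ => (1 / a) * (u ^ (s - 1) * (1 + u) ^ (-T))) (p := a) ha.ne'
  rw [← MeasureTheory.integral_const_mul]
  rw [← key]
  refine setIntegral_congr_fun measurableSet_Ioi fun r hr => ?_
  have hr' := mem_Ioi.mp hr
  have h1 : (r ^ a) ^ (s - 1) = r ^ (a * (s - 1)) := (Real.rpow_mul hr'.le a (s-1)).symm
  simp only [smul_eq_mul, abs_of_pos ha, h1]
  rw [show a * s - 1 = (a - 1) + a * (s - 1) by ring, Real.rpow_add hr']
  field_simp

lemma ball_radial {a R c : ℝ} (ha : 0 < a) (hR : 0 < R) (hc : 0 < c) (hac : 1 ≤ a * c) :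
    ∫ r in Ioo (0:ℝ) R, r ^ (a * c - 1) * (1 + r ^ a) ^ (-(1 + c))
      = (1 / (a * c)) * R ^ (a * c) * (1 + R ^ a) ^ (-c) := by
  have hac0 : (0:ℝ) < a * c := by positivity
  set F : ℝ → ℝ := fun r => (1 / (a * c)) * r ^ (a * c) * (1 + r ^ a) ^ (-c) with hF
  have hbase : ∀ r : ℝ, 0 ≤ r → (0:ℝ) < 1 + r ^ a := fun r hr => by
    have := Real.rpow_nonneg hr a; linarith
  have hcont : ContinuousOn F (Icc 0 R) := by
    apply ContinuousOn.mul
    · apply ContinuousOn.mul continuousOn_const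
      exact fun x hx => (Real.continuousAt_rpow_const x _ (Or.inr hac0.le)).continuousWithinAt
    · apply ContinuousOn.rpow_const
      · exact continuousOn_const.add
          (fun x hx => (Real.continuousAt_rpow_const x _ (Or.inr ha.le)).continuousWithinAt)
      · exact fun x hx => Or.inl (hbase x hx.1).ne'
  have hderiv : ∀ x ∈ Ioo 0 R, HasDerivAt F (x ^ (a * c - 1) * (1 + x ^ a) ^ (-(1 + c))) x := by
    intro x hx
    have hx0 : (0:ℝ) < x := hx.1
    have hb : (0:ℝ) < 1 + x ^ a := hbase x hx0.le
    have h1 : HasDerivAt (fun r : ℝ => (1 / (a * c)) * r ^ (a * c))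
        ((1 / (a * c)) * ((a * c) * x ^ (a * c - 1))) x :=
      (Real.hasDerivAt_rpow_const (Or.inl hx0.ne')).const_mul _
    have h2 : HasDerivAt (fun r : ℝ => 1 + r ^ a) (a * x ^ (a - 1)) x := by
      simpa using (Real.hasDerivAt_rpow_const (p := a) (Or.inl hx0.ne')).const_add 1
    have h3 : HasDerivAt (fun r : ℝ => (1 + r ^ a) ^ (-c))
        (a * x ^ (a - 1) * (-c) * (1 + x ^ a) ^ (-c - 1)) x :=
      h2.rpow_const (Or.inl hb.ne')
    have h4 := h1.mul h3
    refine h4.congr_deriv ?_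
    symm
    have e1 := Real.rpow_add_one hb.ne' (-c - 1)
    rw [show (-c - 1 + 1 : ℝ) = -c by ring] at e1
    have e2 : (1 + x ^ a) ^ (-(1 + c)) = (1 + x ^ a) ^ (-c - 1) := by
      rw [show (-(1 + c) : ℝ) = -c - 1 by ring]
    have e3 : x ^ (a * c) * x ^ (a - 1) = x ^ (a * c - 1) * x ^ a := by
      rw [← Real.rpow_add hx0, ← Real.rpow_add hx0]; ring_nf
    rw [e2, e1]
    have e4 : x ^ (a * c) * (a * x ^ (a - 1) * -c * (1 + x ^ a) ^ (-c - 1))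
        = (a * c) * (-(x ^ (a * c - 1) * x ^ a * (1 + x ^ a) ^ (-c - 1))) := by
      linear_combination (a * -c * (1 + x ^ a) ^ (-c - 1)) * e3
    rw [mul_assoc (1 / (a * c)) (x ^ (a * c)), e4]
    field_simp
    ring
  rw [show ∫ r in Ioo (0:ℝ) R, r ^ (a * c - 1) * (1 + r ^ a) ^ (-(1 + c))
      = ∫ r in (0:ℝ)..R, r ^ (a * c - 1) * (1 + r ^ a) ^ (-(1 + c)) by
    rw [intervalIntegral.integral_of_le hR.le, MeasureTheory.integral_Ioc_eq_integral_Ioo]]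
  have hint : IntervalIntegrable (fun r : ℝ => r ^ (a * c - 1) * (1 + r ^ a) ^ (-(1 + c)))
      volume 0 R := by
    apply ContinuousOn.intervalIntegrable
    rw [uIcc_of_le hR.le]
    apply ContinuousOn.mul
    · exact fun x hx => (Real.continuousAt_rpow_const x _ (Or.inr (by linarith))).continuousWithinAt
    · apply ContinuousOn.rpow_const
      · exact continuousOn_const.add
          (fun x hx => (Real.continuousAt_rpow_const x _ (Or.inr ha.le)).continuousWithinAt)
      · exact fun x hx => Or.inl (hbase x hx.1).ne'
  rw [intervalIntegral.integral_eq_sub_of_hasDeriv_right_of_le hR.le hcont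
    (fun x hx => (hderiv x hx).hasDerivWithinAt) hint]
  have hF0 : F 0 = 0 := by
    simp only [hF]
    rw [Real.zero_rpow hac0.ne']
    ring
  rw [hF0, hF]
  ring

lemma ballVol_pos (n : ℕ) : 0 < ballVol n := by
  rw [ballVol]
  have h1 : 0 < Real.Gamma (1 + (n : ℝ) / 2) := Real.Gamma_pos_of_pos (by positivity)
  have h2 : (0:ℝ) < Real.pi ^ ((n : ℝ) / 2) := Real.rpow_pos_of_pos Real.pi_pos _
  positivity

lemma ballVol_eq (n : ℕ) (hn : 1 ≤ n) :
    (volume (ball (0 : Euc n) 1)).toReal = ballVol n := by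
  have : Nonempty (Fin n) := ⟨⟨0, hn⟩⟩
  rw [EuclideanSpace.volume_ball]
  have h1 : Real.sqrt Real.pi ^ n = Real.pi ^ ((n : ℝ) / 2) := by
    rw [Real.sqrt_eq_rpow, ← Real.rpow_natCast (Real.pi ^ ((1:ℝ)/2)) n,
      ← Real.rpow_mul Real.pi_pos.le]
    norm_num
    rw [mul_comm, mul_one_div]
  simp only [Fintype.card_fin, ENNReal.ofReal_one, one_pow, one_mul]
  rw [ENNReal.toReal_ofReal (by positivity)]
  rw [h1, ballVol, add_comm ((n:ℝ)/2) 1]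

lemma sphereMeasure_real (n : ℕ) (hn : 1 ≤ n) :
    ((sphereMeasure n) univ).toReal = (n : ℝ) * ballVol n := by
  rw [sphereMeasure, Measure.toSphere_apply_univ, ENNReal.toReal_mul,
    ← ballVol_eq n hn]
  congr 1
  · simp [finrank_euclideanSpace_fin]

lemma sphArea_eq (n : ℕ) (hn : 1 ≤ n) : sphArea n = (n : ℝ) * ballVol n := by
  rw [sphArea, ballVol]
  have hn0 : (0:ℝ) < (n : ℝ) := by exact_mod_cast hn
  have hn2 : ((n : ℝ) / 2) ≠ 0 := by positivity
  rw [show (1 + (n : ℝ) / 2) = (n : ℝ)/2 + 1 by ring, Real.Gamma_add_one hn2]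
  have h1 : Real.Gamma ((n:ℝ)/2) ≠ 0 := (Real.Gamma_pos_of_pos (by positivity)).ne'
  field_simp

lemma mixedNorm_radial (n : ℕ) (p pb : ℝ) (hp : 0 < p) (hpb : 0 < pb)
    (f : Euc n → ℝ) (g : ℝ → ℝ) (hg : ∀ r, 0 < r → 0 ≤ g r)
    (hfg : ∀ r : ℝ, 0 < r → ∀ θ : sphere (0 : Euc n) 1, f (r • (θ : Euc n)) = g r) :
    mixedNorm n p pb f = ((sphereMeasure n) univ).toReal ^ (1 / pb) *
      (∫ r in Ioi (0:ℝ), g r ^ p * r ^ ((n:ℝ) - 1)) ^ (1 / p) := by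
  set ω := ((sphereMeasure n) univ).toReal with hω
  have hω0 : 0 ≤ ω := ENNReal.toReal_nonneg
  rw [mixedNorm]
  have step1 : ∀ r ∈ Ioi (0:ℝ),
      (∫ θ, |f (r • (θ : Euc n))| ^ pb ∂(sphereMeasure n)) ^ (p / pb) * r ^ ((n:ℝ) - 1)
        = ω ^ (p / pb) * (g r ^ p * r ^ ((n:ℝ) - 1)) := by
    intro r hr
    have hr' := mem_Ioi.mp hr
    have h1 : ∀ θ : sphere (0 : Euc n) 1, |f (r • (θ : Euc n))| ^ pb = g r ^ pb := by
      intro θ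
      rw [hfg r hr' θ, abs_of_nonneg (hg r hr')]
    rw [integral_congr_ae (Filter.Eventually.of_forall h1), integral_const, smul_eq_mul, measureReal_def, ← hω,
      Real.mul_rpow hω0 (Real.rpow_nonneg (hg r hr') pb),
      ← Real.rpow_mul (hg r hr'), show pb * (p / pb) = p by field_simp]
    ring
  rw [setIntegral_congr_fun measurableSet_Ioi step1, MeasureTheory.integral_const_mul,
    Real.mul_rpow (Real.rpow_nonneg hω0 _) (setIntegral_nonneg measurableSet_Ioi
      (fun r hr => mul_nonneg (Real.rpow_nonneg (hg r (mem_Ioi.mp hr)) p)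
        (Real.rpow_nonneg (le_of_lt (mem_Ioi.mp hr)) _))),
    ← Real.rpow_mul hω0]
  congr 2
  field_simp

lemma integral_ball_radial (n : ℕ) (hn : 1 ≤ n) (g : ℝ → ℝ) (R : ℝ) (hR : 0 < R) :
    ∫ y in {y : Euc n | ‖y‖ < R}, g ‖y‖ =
      (n : ℝ) * ballVol n * ∫ r in Ioo (0:ℝ) R, r ^ (n - 1 : ℕ) * g r := by
  have hms : MeasurableSet {y : Euc n | ‖y‖ < R} := by
    have : {y : Euc n | ‖y‖ < R} = ball 0 R := by
      ext y; simp [mem_ball, dist_eq_norm]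
    rw [this]; exact measurableSet_ball
  have : Nontrivial (Euc n) := Module.nontrivial_of_finrank_pos
    (R := ℝ) (by rw [finrank_euclideanSpace_fin]; omega)
  rw [← integral_indicator hms]
  have h1 : ∀ y : Euc n, indicator {y : Euc n | ‖y‖ < R} (fun y => g ‖y‖) y
      = (Iio R).indicator g ‖y‖ := by
    intro y
    by_cases h : ‖y‖ < R <;> simp [indicator, h]
  rw [integral_congr_ae (Filter.Eventually.of_forall h1),
    integral_fun_norm_addHaar (volume : Measure (Euc n)) ((Iio R).indicator g)]
  simp only [finrank_euclideanSpace_fin, nsmul_eq_mul, smul_eq_mul]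
  rw [measureReal_def, ballVol_eq n hn, mul_assoc]
  congr 1
  congr 1
  have h2 : ∀ r ∈ Ioi (0:ℝ), r ^ (n - 1 : ℕ) * (Iio R).indicator g r
      = (Ioo (0:ℝ) R).indicator (fun r => r ^ (n - 1 : ℕ) * g r) r := by
    intro r hr
    have hr' := mem_Ioi.mp hr
    by_cases h : r < R <;> simp [indicator, h, hr']
  rw [setIntegral_congr_fun measurableSet_Ioi h2, setIntegral_indicator measurableSet_Ioo,
    Set.inter_eq_self_of_subset_right Ioo_subset_Ioi_self]

lemma hardy_val (n : ℕ) (hn : 2 ≤ n) {β a : ℝ} (ha : 0 < a)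
    (x : Euc n) (hx : 0 < ‖x‖) :
    fracHardyOp n β (fun y => (1 + ‖y‖ ^ a) ^ (-(1 + (n:ℝ)/a))) x
      = ballVol n ^ (β/(n:ℝ)) * ‖x‖ ^ β * (1 + ‖x‖ ^ a) ^ (-((n:ℝ)/a)) := by
  have hn1 : 1 ≤ n := by omega
  have hn0 : (0:ℝ) < (n:ℝ) := by exact_mod_cast (by omega : 0 < n)
  have hΩ : 0 < ballVol n := ballVol_pos n
  have han : a * ((n:ℝ)/a) = (n:ℝ) := by field_simp
  have hb : ∫ y in {y : Euc n | ‖y‖ < ‖x‖}, (1 + ‖y‖ ^ a) ^ (-(1 + (n:ℝ)/a))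
      = (n : ℝ) * ballVol n *
        ∫ r in Ioo (0:ℝ) ‖x‖, r ^ (n - 1 : ℕ) * (1 + r ^ a) ^ (-(1 + (n:ℝ)/a)) :=
    integral_ball_radial n hn1 (fun t => (1 + t ^ a) ^ (-(1 + (n:ℝ)/a))) ‖x‖ hx
  have hconv : ∀ r ∈ Ioo (0:ℝ) ‖x‖, (r : ℝ) ^ (n - 1 : ℕ) * (1 + r ^ a) ^ (-(1 + (n:ℝ)/a))
      = r ^ (a * ((n:ℝ)/a) - 1) * (1 + r ^ a) ^ (-(1 + (n:ℝ)/a)) := by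
    intro r hr
    congr 1
    rw [← Real.rpow_natCast r (n - 1)]
    congr 1
    rw [Nat.cast_sub hn1, Nat.cast_one, han]
  have hball := ball_radial ha hx (div_pos hn0 ha) (by rw [han]; exact_mod_cast hn1)
  rw [fracHardyOp, hb, setIntegral_congr_fun measurableSet_Ioo hconv, hball, han]
  rw [Real.mul_rpow (Real.rpow_nonneg hΩ.le _) (norm_nonneg x), ← Real.rpow_mul hΩ.le]
  have e1 : (n:ℝ) * ballVol n * (1 / (n:ℝ) * ‖x‖ ^ ((n:ℝ)) * (1 + ‖x‖ ^ a) ^ (-((n:ℝ)/a)))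
      = ballVol n * ‖x‖ ^ ((n:ℝ)) * (1 + ‖x‖ ^ a) ^ (-((n:ℝ)/a)) := by
    field_simp
  rw [e1]
  have e2 : ballVol n ^ ((1:ℝ)/(n:ℝ) * -((n:ℝ) - β)) * ballVol n = ballVol n ^ (β/(n:ℝ)) := by
    nth_rewrite 2 [← Real.rpow_one (ballVol n)]
    rw [← Real.rpow_add hΩ]
    congr 1
    field_simp
    ring
  have e3 : ‖x‖ ^ (-((n:ℝ) - β)) * ‖x‖ ^ ((n:ℝ)) = ‖x‖ ^ β := by
    rw [← Real.rpow_add hx]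
    congr 1
    ring
  calc ballVol n ^ ((1:ℝ)/(n:ℝ) * -((n:ℝ) - β)) * ‖x‖ ^ (-((n:ℝ) - β)) *
        (ballVol n * ‖x‖ ^ ((n:ℝ)) * (1 + ‖x‖ ^ a) ^ (-((n:ℝ)/a)))
      = (ballVol n ^ ((1:ℝ)/(n:ℝ) * -((n:ℝ) - β)) * ballVol n) *
        (‖x‖ ^ (-((n:ℝ) - β)) * ‖x‖ ^ ((n:ℝ))) * (1 + ‖x‖ ^ a) ^ (-((n:ℝ)/a)) := by ring
    _ = ballVol n ^ (β/(n:ℝ)) * ‖x‖ ^ β * (1 + ‖x‖ ^ a) ^ (-((n:ℝ)/a)) := by rw [e2, e3]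

lemma final_id {Ω B a n' p q β pb qb c : ℝ} (hΩ : 0 < Ω) (hB : 0 < B) (ha : 0 < a)
    (hn' : 0 < n') (hq : 0 < q) (hc : 0 < c)
    (hpq : 1 / p - 1 / q = β / n') :
    (n' * Ω) ^ (1 / qb) * (Ω ^ (β / n' * q) * (1 / a * (c * B))) ^ (1 / q)
      = c ^ (1 / q) * (n' / a * B) ^ (-(β / n')) * (n' * Ω) ^ (1 / qb - 1 / pb + β / n') *
        ((n' * Ω) ^ (1 / pb) * (1 / a * B) ^ (1 / p)) := by
  have hK : (0:ℝ) < B / a := div_pos hB ha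
  have hω : (0:ℝ) < n' * Ω := by positivity
  set u := β / n' with hu
  rw [show (1:ℝ) / a * (c * B) = c * (B / a) by ring, show (1:ℝ) / a * B = B / a by ring,
    show n' / a * B = n' * (B / a) by ring]
  have h1 : (0:ℝ) < Ω ^ (u * q) * (c * (B / a)) :=
    mul_pos (Real.rpow_pos_of_pos hΩ _) (mul_pos hc hK)
  have h2 : (0:ℝ) < n' * (B / a) := mul_pos hn' hK
  have hL : (0:ℝ) < (n' * Ω) ^ (1 / qb) * (Ω ^ (u * q) * (c * (B / a))) ^ (1 / q) :=
    mul_pos (Real.rpow_pos_of_pos hω _) (Real.rpow_pos_of_pos h1 _)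
  have hR : (0:ℝ) < c ^ (1 / q) * (n' * (B / a)) ^ (-u) * (n' * Ω) ^ (1 / qb - 1 / pb + u) *
      ((n' * Ω) ^ (1 / pb) * (B / a) ^ (1 / p)) :=
    mul_pos (mul_pos (mul_pos (Real.rpow_pos_of_pos hc _) (Real.rpow_pos_of_pos h2 _))
      (Real.rpow_pos_of_pos hω _))
      (mul_pos (Real.rpow_pos_of_pos hω _) (Real.rpow_pos_of_pos hK _))
  apply Real.log_injOn_pos (mem_Ioi.mpr hL) (mem_Ioi.mpr hR)
  have eL : Real.log ((n' * Ω) ^ (1 / qb) * (Ω ^ (u * q) * (c * (B / a))) ^ (1 / q))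
      = (1 / qb) * (Real.log n' + Real.log Ω) +
        (1 / q) * (u * q * Real.log Ω + (Real.log c + Real.log (B / a))) := by
    rw [Real.log_mul (Real.rpow_pos_of_pos hω _).ne' (Real.rpow_pos_of_pos h1 _).ne',
      Real.log_rpow hω, Real.log_rpow h1, Real.log_mul hn'.ne' hΩ.ne',
      Real.log_mul (Real.rpow_pos_of_pos hΩ _).ne' (mul_pos hc hK).ne',
      Real.log_rpow hΩ, Real.log_mul hc.ne' hK.ne']
  have eR : Real.log (c ^ (1 / q) * (n' * (B / a)) ^ (-u) * (n' * Ω) ^ (1 / qb - 1 / pb + u) *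
        ((n' * Ω) ^ (1 / pb) * (B / a) ^ (1 / p)))
      = (1 / q) * Real.log c + (-u) * (Real.log n' + Real.log (B / a)) +
        (1 / qb - 1 / pb + u) * (Real.log n' + Real.log Ω) +
        ((1 / pb) * (Real.log n' + Real.log Ω) + (1 / p) * Real.log (B / a)) := by
    rw [Real.log_mul (mul_pos (mul_pos (Real.rpow_pos_of_pos hc _)
        (Real.rpow_pos_of_pos h2 _)) (Real.rpow_pos_of_pos hω _)).ne'
        (mul_pos (Real.rpow_pos_of_pos hω _) (Real.rpow_pos_of_pos hK _)).ne',
      Real.log_mul (mul_pos (Real.rpow_pos_of_pos hc _) (Real.rpow_pos_of_pos h2 _)).ne'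
        (Real.rpow_pos_of_pos hω _).ne',
      Real.log_mul (Real.rpow_pos_of_pos hc _).ne' (Real.rpow_pos_of_pos h2 _).ne',
      Real.log_mul (Real.rpow_pos_of_pos hω _).ne' (Real.rpow_pos_of_pos hK _).ne',
      Real.log_rpow hc, Real.log_rpow h2, Real.log_rpow hω, Real.log_rpow hω,
      Real.log_rpow hK, Real.log_mul hn'.ne' hK.ne', Real.log_mul hn'.ne' hΩ.ne']
  rw [eL, eR]
  have hq' : q ≠ 0 := hq.ne'
  have e3 : 1 / q * (u * q * Real.log Ω + (Real.log c + Real.log (B / a)))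
      = u * Real.log Ω + 1 / q * Real.log c + 1 / q * Real.log (B / a) := by
    field_simp
    ring
  have e4 : 1 / p = 1 / q + u := by rw [hu]; linarith
  rw [e3, e4]
  ring

/-- extremality of f₀(x) = (1+|x|^{qβ})^{-(1+n/(qβ))} and sharpness of
C_{p,q,n,β}·ω_n^{1/q̄-1/p̄+β/n} on mixed radial-angular spaces. -/
theorem fracHardy_mixed_extremal (n : ℕ) (hn : 2 ≤ n) (β p q pb qb : ℝ)
    (hβ0 : 0 < β) (hβn : β < n) (hpb : 1 < pb) (hqb : 1 < qb)
    (hp : 1 < p) (hpq : p < q) (hscal : 1 / p - 1 / q = β / n) :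
    mixedNorm n q qb
        (fracHardyOp n β fun x => (1 + ‖x‖ ^ (q * β)) ^ (-(1 + (n : ℝ) / (q * β))))
        = fracHardyConst p q n β * sphArea n ^ (1 / qb - 1 / pb + β / (n : ℝ)) *
          mixedNorm n p pb (fun x => (1 + ‖x‖ ^ (q * β)) ^ (-(1 + (n : ℝ) / (q * β)))) ∧
      ∀ C : ℝ, 0 ≤ C →
        (∀ f : Euc n → ℝ, (∀ x, 0 ≤ f x) → Measurable f →
          mixedNorm n q qb (fracHardyOp n β f) ≤ C * mixedNorm n p pb f) →
        fracHardyConst p q n β * sphArea n ^ (1 / qb - 1 / pb + β / (n : ℝ)) ≤ C := by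
  have hq : 1 < q := hp.trans hpq
  have hp0 : (0:ℝ) < p := by linarith
  have hq0 : (0:ℝ) < q := by linarith
  have hn1 : 1 ≤ n := by omega
  have hn0 : (0:ℝ) < (n:ℝ) := by exact_mod_cast (by omega : 0 < n)
  have hΩ : 0 < ballVol n := ballVol_pos n
  have hqb0 : (0:ℝ) < qb := by linarith
  have hpb0 : (0:ℝ) < pb := by linarith
  have key : (n:ℝ) * q = (n:ℝ) * p + p * q * β := by
    have h1 : p ≠ 0 := hp0.ne'
    have h2 : q ≠ 0 := hq0.ne'
    have h3 : (n:ℝ) ≠ 0 := hn0.ne'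
    field_simp at hscal
    linarith
  have ha : (0:ℝ) < q * β := by positivity
  set a := q * β with ha_def
  have hm : (0:ℝ) < (n:ℝ) / a := div_pos hn0 ha
  have han : a * ((n:ℝ)/a) = (n:ℝ) := by field_simp
  have hqm : q * ((n:ℝ)/a) = p * (1 + (n:ℝ)/a) := by
    rw [ha_def]
    field_simp
    linarith [key]
  have ht₁ : (0:ℝ) < q * ((n:ℝ)/a) - (n:ℝ)/a - 1 := by
    have h5 : (q * ((n:ℝ)/a) - (n:ℝ)/a - 1) = (p - 1) * (1 + (n:ℝ)/a) := by
      linarith [hqm]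
    rw [h5]
    have : (0:ℝ) < 1 + (n:ℝ)/a := by linarith
    nlinarith
  have ht₂ : (0:ℝ) < p * (1 + (n:ℝ)/a) - (n:ℝ)/a := by nlinarith
  have hs₁ : (0:ℝ) < 1 + (n:ℝ)/a := by linarith
  have hc : (0:ℝ) < p / (p - 1) / q := by
    apply div_pos (div_pos hp0 (by linarith)) hq0
  set ω := ((sphereMeasure n) univ).toReal with hω_def
  have hω_eq : ω = (n:ℝ) * ballVol n := sphereMeasure_real n hn1
  -- radial form of mixedNorm of f₀
  have hMp : mixedNorm n p pb (fun x : Euc n => (1 + ‖x‖ ^ a) ^ (-(1 + (n:ℝ)/a)))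
      = ω ^ (1/pb) *
        (∫ r in Ioi (0:ℝ), ((1 + r ^ a) ^ (-(1 + (n:ℝ)/a))) ^ p * r ^ ((n:ℝ)-1)) ^ (1/p) := by
    apply mixedNorm_radial n p pb hp0 hpb0 _ (fun t => (1 + t ^ a) ^ (-(1 + (n:ℝ)/a)))
    · intro r hr
      exact Real.rpow_nonneg (by have := Real.rpow_nonneg hr.le a; linarith) _
    · intro r hr θ
      have hnrm : ‖r • (θ : Euc n)‖ = r := by
        rw [norm_smul, norm_eq_of_mem_sphere θ, Real.norm_eq_abs, abs_of_pos hr, mul_one]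
      simp only [hnrm]
  -- radial form of mixedNorm of H_β f₀
  have hMq : mixedNorm n q qb
        (fracHardyOp n β (fun x : Euc n => (1 + ‖x‖ ^ a) ^ (-(1 + (n:ℝ)/a))))
      = ω ^ (1/qb) *
        (∫ r in Ioi (0:ℝ),
          (ballVol n ^ (β/(n:ℝ)) * r ^ β * (1 + r ^ a) ^ (-((n:ℝ)/a))) ^ q *
            r ^ ((n:ℝ)-1)) ^ (1/q) := by
    apply mixedNorm_radial n q qb hq0 hqb0 _
      (fun t => ballVol n ^ (β/(n:ℝ)) * t ^ β * (1 + t ^ a) ^ (-((n:ℝ)/a)))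
    · intro r hr
      exact mul_nonneg (mul_nonneg (Real.rpow_nonneg hΩ.le _) (Real.rpow_nonneg hr.le _))
        (Real.rpow_nonneg (by have := Real.rpow_nonneg hr.le a; linarith) _)
    · intro r hr θ
      have hnrm : ‖r • (θ : Euc n)‖ = r := by
        rw [norm_smul, norm_eq_of_mem_sphere θ, Real.norm_eq_abs, abs_of_pos hr, mul_one]
      have hx : 0 < ‖r • (θ : Euc n)‖ := by rw [hnrm]; exact hr
      rw [hardy_val n hn ha (r • (θ : Euc n)) hx, hnrm]
  -- integral computations
  have hJp : ∫ r in Ioi (0:ℝ), ((1 + r ^ a) ^ (-(1 + (n:ℝ)/a))) ^ p * r ^ ((n:ℝ)-1)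
      = (1/a) * betaFn ((n:ℝ)/a) (p * (1 + (n:ℝ)/a) - (n:ℝ)/a) := by
    have hpoint : ∀ r ∈ Ioi (0:ℝ), ((1 + r ^ a) ^ (-(1 + (n:ℝ)/a))) ^ p * r ^ ((n:ℝ)-1)
        = r ^ (a * ((n:ℝ)/a) - 1) *
          (1 + r ^ a) ^ (-((n:ℝ)/a + (p * (1 + (n:ℝ)/a) - (n:ℝ)/a))) := by
      intro r hr
      have hr' := mem_Ioi.mp hr
      have hb : (0:ℝ) < 1 + r ^ a := by have := Real.rpow_nonneg hr'.le a; linarith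
      rw [← Real.rpow_mul hb.le,
        show (-(1 + (n:ℝ)/a)) * p = -((n:ℝ)/a + (p * (1 + (n:ℝ)/a) - (n:ℝ)/a)) by ring,
        show a * ((n:ℝ)/a) - 1 = (n:ℝ) - 1 by rw [han]]
      ring
    rw [setIntegral_congr_fun measurableSet_Ioi hpoint, integral_comp_sub ha,
      integral_Ioi_betaFn hm ht₂]
  have hJq : ∫ r in Ioi (0:ℝ),
        (ballVol n ^ (β/(n:ℝ)) * r ^ β * (1 + r ^ a) ^ (-((n:ℝ)/a))) ^ q * r ^ ((n:ℝ)-1)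
      = ballVol n ^ (β/(n:ℝ) * q) *
        ((1/a) * betaFn (1 + (n:ℝ)/a) (q * ((n:ℝ)/a) - (n:ℝ)/a - 1)) := by
    have hpoint : ∀ r ∈ Ioi (0:ℝ),
        (ballVol n ^ (β/(n:ℝ)) * r ^ β * (1 + r ^ a) ^ (-((n:ℝ)/a))) ^ q * r ^ ((n:ℝ)-1)
        = ballVol n ^ (β/(n:ℝ) * q) *
          (r ^ (a * (1 + (n:ℝ)/a) - 1) *
            (1 + r ^ a) ^ (-((1 + (n:ℝ)/a) + (q * ((n:ℝ)/a) - (n:ℝ)/a - 1)))) := by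
      intro r hr
      have hr' := mem_Ioi.mp hr
      have hb : (0:ℝ) < 1 + r ^ a := by have := Real.rpow_nonneg hr'.le a; linarith
      rw [Real.mul_rpow (mul_nonneg (Real.rpow_nonneg hΩ.le _) (Real.rpow_nonneg hr'.le _))
          (Real.rpow_nonneg hb.le _),
        Real.mul_rpow (Real.rpow_nonneg hΩ.le _) (Real.rpow_nonneg hr'.le _),
        ← Real.rpow_mul hΩ.le, ← Real.rpow_mul hr'.le, ← Real.rpow_mul hb.le,
        show a * (1 + (n:ℝ)/a) - 1 = β * q + ((n:ℝ) - 1) by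
          rw [mul_add, han, mul_one, ha_def]; ring,
        Real.rpow_add hr',
        show -((1 + (n:ℝ)/a) + (q * ((n:ℝ)/a) - (n:ℝ)/a - 1)) = -((n:ℝ)/a) * q by ring]
      ring
    rw [setIntegral_congr_fun measurableSet_Ioi hpoint, MeasureTheory.integral_const_mul,
      integral_comp_sub ha, integral_Ioi_betaFn hs₁ ht₁]
  -- Beta recurrence
  have hB1 : betaFn (1 + (n:ℝ)/a) (q * ((n:ℝ)/a) - (n:ℝ)/a - 1)
      = (p / (p - 1) / q) * betaFn ((n:ℝ)/a) (p * (1 + (n:ℝ)/a) - (n:ℝ)/a) := by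
    have hrec := betaFn_rec hm ht₁
    rw [show (q * ((n:ℝ)/a) - (n:ℝ)/a - 1) + 1 = p * (1 + (n:ℝ)/a) - (n:ℝ)/a by
      linarith [hqm]] at hrec
    have hcross : (n:ℝ)/a * ((p-1) * q) = p * (q * ((n:ℝ)/a) - (n:ℝ)/a - 1) := by
      linear_combination -hqm
    have hp1 : p - 1 ≠ 0 := by linarith
    have ht₁0 : (q * ((n:ℝ)/a) - (n:ℝ)/a - 1) ≠ 0 := ht₁.ne'
    generalize hYd : betaFn ((n:ℝ)/a) (p * (1 + (n:ℝ)/a) - (n:ℝ)/a) = Y at hrec ⊢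
    rw [show (1 + (n:ℝ)/a) = (n:ℝ)/a + 1 by ring]
    generalize hXd : betaFn ((n:ℝ)/a + 1) (q * ((n:ℝ)/a) - (n:ℝ)/a - 1) = X at hrec ⊢
    have hX : X * ((p-1)*q) * (q * ((n:ℝ)/a) - (n:ℝ)/a - 1)
        = p * Y * (q * ((n:ℝ)/a) - (n:ℝ)/a - 1) := by
      linear_combination ((p-1)*q) * hrec + Y * hcross
    have hXY : X * ((p-1)*q) = p * Y := mul_right_cancel₀ ht₁0 hX
    field_simp
    linear_combination hXY
  -- rewrite fracHardyConst
  have hconst : fracHardyConst p q n β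
      = (p / (p - 1) / q) ^ (1/q) *
        (((n:ℝ)/a) * betaFn ((n:ℝ)/a) (p * (1 + (n:ℝ)/a) - (n:ℝ)/a)) ^ (-(β/(n:ℝ))) := by
    rw [fracHardyConst, ← ha_def]
    have harg : (n:ℝ) / ((q / (q - 1)) * β) = p * (1 + (n:ℝ)/a) - (n:ℝ)/a := by
      rw [ha_def]
      have hq1 : q - 1 ≠ 0 := by linarith
      have hq1 : (q:ℝ) - 1 ≠ 0 := by linarith
      rw [div_eq_iff (by positivity : (q / (q - 1)) * β ≠ 0)]
      field_simp
      linear_combination key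
    rw [harg]
  -- part 1
  have hpart1 : mixedNorm n q qb
        (fracHardyOp n β (fun x : Euc n => (1 + ‖x‖ ^ a) ^ (-(1 + (n:ℝ)/a))))
      = fracHardyConst p q n β * sphArea n ^ (1 / qb - 1 / pb + β / (n : ℝ)) *
          mixedNorm n p pb (fun x : Euc n => (1 + ‖x‖ ^ a) ^ (-(1 + (n:ℝ)/a))) := by
    rw [hMq, hMp, hJq, hJp, hB1, hconst, sphArea_eq n hn1, hω_eq]
    exact final_id hΩ (betaFn_pos hm ht₂) ha hn0 hq0 hc hscal
  refine ⟨hpart1, ?_⟩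
  intro C hC0 hCle
  have hf0nonneg : ∀ x : Euc n, 0 ≤ (1 + ‖x‖ ^ a) ^ (-(1 + (n:ℝ)/a)) := fun x =>
    Real.rpow_nonneg (by have := Real.rpow_nonneg (norm_nonneg x) a; linarith) _
  have hf0meas : Measurable (fun x : Euc n => (1 + ‖x‖ ^ a) ^ (-(1 + (n:ℝ)/a))) := by
    apply Continuous.measurable
    apply Continuous.rpow_const
    · exact continuous_const.add (continuous_norm.rpow_const fun x => Or.inr ha.le)
    · intro x
      exact Or.inl (by have := Real.rpow_nonneg (norm_nonneg x) a; positivity)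
  have h2 := hCle _ hf0nonneg hf0meas
  rw [hpart1] at h2
  have hMppos : 0 < mixedNorm n p pb (fun x : Euc n => (1 + ‖x‖ ^ a) ^ (-(1 + (n:ℝ)/a))) := by
    rw [hMp, hJp, hω_eq]
    exact mul_pos (Real.rpow_pos_of_pos (mul_pos hn0 hΩ) _)
      (Real.rpow_pos_of_pos (mul_pos (by positivity) (betaFn_pos hm ht₂)) _)
  exact le_of_mul_le_mul_right h2 hMppos

end
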